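/- Let μ and μ' be two stable matchings of the same stable marriage instance. Define σ : M → W by letting σ(m) be whichever of μ(m) and μ'(m) the man m prefers (with respect to ≻_m, taking σ(m) = μ(m) if μ(m) = μ'(m)). Then σ is a bijection from M to W and σ is a stable matching; moreover, every woman w receives in σ the ≻_w-worse of her two partners μ⁻¹(w) and μ'⁻¹(w). -/

import Mathlib

/-- A stable marriage instance: finite sets `M` of men and `W` of women of equal
positive cardinality, with strict total preference orders for each agent. -/
structure SMInstance (M W : Type) [Fintype M] [Fintype W] where
  card_eq : Fintype.card M = Fintype.card W
  card_pos : 1 ≤ Fintype.card M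
  prefM : M → W → W → Prop
  prefW : W → M → M → Prop
  prefM_sto : ∀ m, IsStrictTotalOrder W (prefM m)
  prefW_sto : ∀ w, IsStrictTotalOrder M (prefW w)

/-- A pair `(m, w)` blocks the matching `μ` if `w ≻_m μ(m)` and `m ≻_w μ⁻¹(w)`. -/
def SMInstance.Blocks {M W : Type} [Fintype M] [Fintype W]
    (I : SMInstance M W) (μ : M ≃ W) (m : M) (w : W) : Prop :=
  I.prefM m w (μ m) ∧ I.prefW w m (μ.symm w)

/-- A matching is stable if no pair blocks it. -/
def SMInstance.Stable {M W : Type} [Fintype M] [Fintype W]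
    (I : SMInstance M W) (μ : M ≃ W) : Prop :=
  ∀ m w, ¬ I.Blocks μ m w

/-- Lattice "meet for men": if each man is given the one of his partners in the two
stable matchings `μ`, `μ'` that he prefers, the result is a bijection and a stable
matching, and each woman gets the worse of her two partners. -/
theorem men_best_of_two_is_stable {M W : Type} [Fintype M] [Fintype W]
    (I : SMInstance M W) (μ μ' : M ≃ W) (hμ : I.Stable μ) (hμ' : I.Stable μ')
    (σ : M → W)
    (hσ_eq : ∀ m : M, μ m = μ' m → σ m = μ m)
    (hσ_pref : ∀ m : M, I.prefM m (μ m) (μ' m) → σ m = μ m)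
    (hσ_pref' : ∀ m : M, I.prefM m (μ' m) (μ m) → σ m = μ' m) :
    Function.Bijective σ ∧
      ∃ e : M ≃ W, (∀ m : M, e m = σ m) ∧ I.Stable e ∧
        ∀ w : W,
          (μ.symm w = μ'.symm w → e.symm w = μ.symm w) ∧
          (I.prefW w (μ.symm w) (μ'.symm w) → e.symm w = μ'.symm w) ∧
          (I.prefW w (μ'.symm w) (μ.symm w) → e.symm w = μ.symm w) := by
  -- basic facts about the strict total orders
  have triM : ∀ m x y, x = y ∨ I.prefM m x y ∨ I.prefM m y x := fun m x y =>
    (@trichotomous_of _ (I.prefM m) (I.prefM_sto m).toTrichotomous x y).elim (fun h => Or.inr (Or.inl h))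
      (fun h => h.elim Or.inl (fun h => Or.inr (Or.inr h)))
  have triW : ∀ w a b, a = b ∨ I.prefW w a b ∨ I.prefW w b a := fun w a b =>
    (@trichotomous_of _ (I.prefW w) (I.prefW_sto w).toTrichotomous a b).elim (fun h => Or.inr (Or.inl h))
      (fun h => h.elim Or.inl (fun h => Or.inr (Or.inr h)))
  have irrW : ∀ w a, ¬ I.prefW w a a := fun w => (I.prefW_sto w).irrefl
  have trM : ∀ m x y z, I.prefM m x y → I.prefM m y z → I.prefM m x z :=
    fun m => (I.prefM_sto m).trans
  -- each man gets one of his two partners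
  have tri : ∀ m, σ m = μ m ∨ σ m = μ' m := by
    intro m
    rcases triM m (μ m) (μ' m) with h | h | h
    · exact Or.inl (hσ_eq m h)
    · exact Or.inl (hσ_pref m h)
    · exact Or.inr (hσ_pref' m h)
  -- if σ chooses one of the partners and they differ, the preference is strict
  have hstrict : ∀ m, σ m = μ m → μ m ≠ μ' m → I.prefM m (μ m) (μ' m) := by
    intro m hs hne
    rcases triM m (μ m) (μ' m) with h | h | h
    · exact absurd h hne
    · exact h
    · exact absurd (hs.symm.trans (hσ_pref' m h)) hne
  have hstrict' : ∀ m, σ m = μ' m → μ m ≠ μ' m → I.prefM m (μ' m) (μ m) := by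
    intro m hs hne
    rcases triM m (μ m) (μ' m) with h | h | h
    · exact absurd h hne
    · exact absurd ((hσ_pref m h).symm.trans hs) hne
    · exact h
  -- key injectivity step
  have key : ∀ a b : M, σ a = μ a → σ b = μ' b → μ a = μ' b → a = b := by
    intro a b ha hb hab
    by_contra hne
    have hμa : μ a ≠ μ' a := fun h => hne (μ'.injective (h.symm.trans hab))
    have hμb : μ b ≠ μ' b := fun h => hne (μ.injective (hab.trans h.symm))
    have hpa : I.prefM a (μ a) (μ' a) := hstrict a ha hμa
    have hpb : I.prefM b (μ' b) (μ b) := hstrict' b hb hμb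
    have hsa : μ.symm (μ a) = a := μ.symm_apply_apply a
    have hsb : μ'.symm (μ a) = b := μ'.symm_apply_eq.mpr hab
    rcases triW (μ a) a b with h | h | h
    · exact hne h
    · exact hμ' a (μ a) ⟨hpa, by rw [hsb]; exact h⟩
    · exact hμ b (μ a) ⟨by rw [hab]; exact hpb, by rw [hsa]; exact h⟩
  have hinj : Function.Injective σ := by
    intro a b hab
    rcases tri a with ha | ha <;> rcases tri b with hb | hb
    · exact μ.injective (ha ▸ hb ▸ hab)
    · exact key a b ha hb (ha ▸ hb ▸ hab)
    · exact (key b a hb ha (hb ▸ ha ▸ hab.symm)).symm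
    · exact μ'.injective (ha ▸ hb ▸ hab)
  have hbij : Function.Bijective σ :=
    (Fintype.bijective_iff_injective_and_card σ).2 ⟨hinj, I.card_eq⟩
  refine ⟨hbij, Equiv.ofBijective σ hbij, fun m => rfl, ?_, ?_⟩
  · -- stability
    intro m w hblock
    obtain ⟨h1, h2⟩ := hblock
    have h1 : I.prefM m w (σ m) := h1
    have h1μ : I.prefM m w (μ m) := by
      rcases triM m (μ m) (μ' m) with h | h | h
      · rwa [hσ_eq m h] at h1
      · rwa [hσ_pref m h] at h1
      · exact trM m w (μ' m) (μ m) (by rwa [hσ_pref' m h] at h1) h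
    have h1μ' : I.prefM m w (μ' m) := by
      rcases triM m (μ m) (μ' m) with h | h | h
      · rw [hσ_eq m h] at h1; rwa [← h]
      · exact trM m w (μ m) (μ' m) (by rwa [hσ_pref m h] at h1) h
      · rwa [hσ_pref' m h] at h1
    have hσm' : σ ((Equiv.ofBijective σ hbij).symm w) = w :=
      (Equiv.ofBijective σ hbij).apply_symm_apply w
    rcases tri ((Equiv.ofBijective σ hbij).symm w) with h | h
    · have hs : μ.symm w = (Equiv.ofBijective σ hbij).symm w :=
        μ.symm_apply_eq.mpr ((h.symm.trans hσm').symm)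
      have h2' : I.prefW w m ((Equiv.ofBijective σ hbij).symm w) := h2
      exact hμ m w ⟨h1μ, by rw [hs]; exact h2'⟩
    · have hs : μ'.symm w = (Equiv.ofBijective σ hbij).symm w :=
        μ'.symm_apply_eq.mpr ((h.symm.trans hσm').symm)
      have h2' : I.prefW w m ((Equiv.ofBijective σ hbij).symm w) := h2
      exact hμ' m w ⟨h1μ', by rw [hs]; exact h2'⟩
  · -- women get the worse partner
    intro w
    have hσme : σ ((Equiv.ofBijective σ hbij).symm w) = w :=
      (Equiv.ofBijective σ hbij).apply_symm_apply w
    have hcase : (Equiv.ofBijective σ hbij).symm w = μ.symm w ∨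
        (Equiv.ofBijective σ hbij).symm w = μ'.symm w := by
      rcases tri ((Equiv.ofBijective σ hbij).symm w) with h | h
      · exact Or.inl (μ.symm_apply_eq.mpr ((h.symm.trans hσme).symm)).symm
      · exact Or.inr (μ'.symm_apply_eq.mpr ((h.symm.trans hσme).symm)).symm
    -- two generalized contradiction lemmas
    have main : ∀ a : M, σ a = w → μ a = w → I.prefW w a (μ'.symm w) → False := by
      intro a hsa hwa hp
      have hne2 : μ a ≠ μ' a := by
        intro hh
        have : μ'.symm w = a := μ'.symm_apply_eq.mpr ((hh.symm.trans hwa).symm)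
        exact irrW w a (this ▸ hp)
      have hpa := hstrict a (hsa.trans hwa.symm) hne2
      exact hμ' a w ⟨by rw [← hwa]; exact hpa, hp⟩
    have main' : ∀ a : M, σ a = w → μ' a = w → I.prefW w a (μ.symm w) → False := by
      intro a hsa hwa hp
      have hne2 : μ a ≠ μ' a := by
        intro hh
        have : μ.symm w = a := μ.symm_apply_eq.mpr ((hh.trans hwa).symm)
        exact irrW w a (this ▸ hp)
      have hpa := hstrict' a (hsa.trans hwa.symm) hne2
      exact hμ a w ⟨by rw [← hwa]; exact hpa, hp⟩
    refine ⟨?_, ?_, ?_⟩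
    · intro heq
      rcases hcase with h | h
      · exact h
      · rw [h, heq]
    · intro hp
      rcases hcase with h | h
      · exact absurd (main (μ.symm w) (by rw [← h]; exact hσme)
          (μ.apply_symm_apply w) hp) not_false
      · exact h
    · intro hp
      rcases hcase with h | h
      · exact h
      · exact absurd (main' (μ'.symm w) (by rw [← h]; exact hσme)
          (μ'.apply_symm_apply w) hp) not_false
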